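/- For every odd integer n ≥ 3, every acyclic proper edge coloring of the complete bipartite graph K_{n,n} uses at least n+2 colors; equivalently, the acyclic chromatic index satisfies a'(K_{n,n}) ≥ n+2. -/

import Mathlib

open SimpleGraph

/-- A proper edge coloring of `G` with `k` colors: any two distinct edges
sharing a vertex receive different colors. -/
def IsProperEdgeColoring {V : Type*} (G : SimpleGraph V) {k : ℕ}
    (C : G.edgeSet → Fin k) : Prop :=
  ∀ e f : G.edgeSet, e ≠ f →
    (∃ v : V, v ∈ (e : Sym2 V) ∧ v ∈ (f : Sym2 V)) → C e ≠ C f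

/-- An edge coloring is acyclic if no cycle of `G` is bichromatic, i.e. no cycle
has all its edges colored with only two colors. -/
def IsAcyclicEdgeColoring {V : Type*} (G : SimpleGraph V) {k : ℕ}
    (C : G.edgeSet → Fin k) : Prop :=
  ∀ (v : V) (w : G.Walk v v), w.IsCycle →
    ¬ ∃ c₁ c₂ : Fin k, ∀ (e : Sym2 V) (he : e ∈ w.edges),
      C ⟨e, w.edges_subset_edgeSet he⟩ = c₁ ∨ C ⟨e, w.edges_subset_edgeSet he⟩ = c₂

/-- The acyclic chromatic index: the least `k` such that `G` admits an acyclic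
proper edge coloring with `k` colors. -/
noncomputable def acyclicChromaticIndex {V : Type*} (G : SimpleGraph V) : ℕ :=
  sInf {k : ℕ | ∃ C : G.edgeSet → Fin k,
    IsProperEdgeColoring G C ∧ IsAcyclicEdgeColoring G C}


open Equiv Equiv.Perm

section PermLemmas
variable {n : ℕ} {u v : Fin n}

lemma subsing_card {z : Fin n} (h : ∀ w : Fin n, w = z) (hn : 2 ≤ n) : False := by
  have : Fintype.card (Fin n) ≤ 1 := Fintype.card_le_one_iff.2 (fun a b => by rw [h a, h b])
  simp at this; omega

/-- If every point is on the cycle of `u`, and `n ≥ 2`, then `τ` is a derangement,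
a cycle with full support. -/
lemma aux_cycle_single (τ : Perm (Fin n)) (hn : 2 ≤ n)
    (hcov : ∀ z, τ.SameCycle z u) : (∀ z, τ z ≠ z) ∧ τ.IsCycle ∧ τ.support = Finset.univ := by
  have hder : ∀ z, τ z ≠ z := by
    intro z hz
    have hz' : Function.IsFixedPt τ z := hz
    have huz : z = u := (hcov z).eq_of_left hz'
    exact subsing_card (fun w => (hcov w).eq_of_right (huz ▸ hz')) hn
  have hsupp : τ.support = Finset.univ := by
    apply Finset.eq_univ_of_forall; intro z; exact Equiv.Perm.mem_support.2 (hder z)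
  refine ⟨hder, ⟨u, hder u, fun y _ => ((hcov y).symm : τ.SameCycle u y)⟩, hsupp⟩

lemma sign_single (τ : Perm (Fin n)) (hn : 2 ≤ n) (hodd : Odd n)
    (hcov : ∀ z, τ.SameCycle z u) : Equiv.Perm.sign τ = 1 := by
  obtain ⟨-, hcyc, hsupp⟩ := aux_cycle_single τ hn hcov
  rw [hcyc.sign, hsupp]
  simp [Finset.card_univ, hodd.neg_one_pow]

/-- Symmetric-case helper: if u is a fixed point, contradiction. -/
lemma aux_two_fixed (τ : Perm (Fin n)) (hn : 3 ≤ n) (hodd : Odd n)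
    (hsign : Equiv.Perm.sign τ = 1)
    (hcov : ∀ z, τ.SameCycle z u ∨ τ.SameCycle z v) (hu : τ u = u) : False := by
  have hu' : Function.IsFixedPt τ u := hu
  have hvcov : ∀ z, z ≠ u → τ.SameCycle z v := by
    intro z hz
    rcases hcov z with h | h
    · exact absurd (h.eq_of_right hu') hz
    · exact h
  by_cases hv : τ v = v
  · -- all points are u or v
    have hv' : Function.IsFixedPt τ v := hv
    have : ∀ w : Fin n, w = u ∨ w = v := by
      intro w
      rcases hcov w with h | h
      · exact Or.inl (h.eq_of_right hu')
      · exact Or.inr (h.eq_of_right hv')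
    -- card ≤ 2 < 3
    have hsub : (Finset.univ : Finset (Fin n)) ⊆ {u, v} := by
      intro w _; rcases this w with h | h <;> simp [h]
    have := Finset.card_le_card hsub
    have h2 : ({u, v} : Finset (Fin n)).card ≤ 2 := Finset.card_insert_le _ _ |>.trans (by simp)
    simp [Finset.card_univ] at this
    omega
  · -- τ is a cycle with support univ.erase u, card n-1 (even), sign = -1
    have hcyc : τ.IsCycle := by
      refine ⟨v, hv, fun y hy => ?_⟩
      have : y ≠ u := fun h => hy (h ▸ hu)
      exact ((hvcov y this).symm : τ.SameCycle v y)
    have hsupp : τ.support = Finset.univ.erase u := by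
      apply Finset.ext; intro z
      simp only [Equiv.Perm.mem_support, Finset.mem_erase, Finset.mem_univ, and_true]
      constructor
      · intro hz; exact fun h => hz (h ▸ hu)
      · intro hz hfix
        have := (hvcov z hz).eq_of_left hfix
        exact hv (this ▸ hfix)
    have hcard : τ.support.card = n - 1 := by
      rw [hsupp, Finset.card_erase_of_mem (Finset.mem_univ u)]
      simp [Finset.card_univ]
    have : Equiv.Perm.sign τ = -1 := by
      rw [hcyc.sign, hcard]
      have : Even (n - 1) := by
        rcases hodd with ⟨m, hm⟩; exact ⟨m, by omega⟩
      simp [this.neg_one_pow]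
    rw [this] at hsign
    exact absurd hsign (by decide)

/-- Two-point coverage: derangement. -/
lemma derangement_two (τ : Perm (Fin n)) (hn : 3 ≤ n) (hodd : Odd n)
    (hsign : Equiv.Perm.sign τ = 1)
    (hcov : ∀ z, τ.SameCycle z u ∨ τ.SameCycle z v) : ∀ z, τ z ≠ z := by
  intro z hz
  have hz' : Function.IsFixedPt τ z := hz
  rcases hcov z with h | h
  · exact aux_two_fixed τ hn hodd hsign hcov (h.eq_of_left hz' ▸ hz)
  · exact aux_two_fixed τ hn hodd hsign (fun w => (hcov w).symm)
      (h.eq_of_left hz' ▸ hz)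

end PermLemmas

open Function


section Orbit
variable {n k : ℕ}

/-- Abbreviation for the "no bichromatic cyclic pattern" hypothesis. -/
def NoPattern (n k : ℕ) (A : Fin n → Fin n → Fin k) : Prop :=
  ∀ (c d : Fin k), c ≠ d → ∀ (t : ℕ) (x y : ℕ → Fin n), 2 ≤ t →
     (∀ i i', i < t → i' < t → x i = x i' → i = i') →
     (∀ i i', i < t → i' < t → y i = y i' → i = i') →
     x t = x 0 →
     (∀ i, i < t → A (x i) (y i) = c) →
     (∀ i, i < t → A (x (i+1)) (y i) = d) → False

/-- If the whole σ-orbit of z is "real" for both colors, we get a pattern: contradiction. -/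
lemma orbit_real_false (A : Fin n → Fin n → Fin k) (hA : NoPattern n k A)
    {c d : Fin k} (hcd : c ≠ d) (ec ed : Perm (Fin n))
    (Pc Pd : Fin n → Prop)
    (hPc : ∀ i, Pc i → A i (ec i) = c)
    (hPd : ∀ i, Pd i → A i (ed i) = d)
    (z : Fin n)
    (horb : ∀ m : ℕ, Pc ((ec.trans ed.symm)^[m] z) ∧ Pd ((ec.trans ed.symm)^[m] z)) :
    False := by
  set σ : Perm (Fin n) := ec.trans ed.symm with hσ
  have hstep : ∀ w : Fin n, ed (σ w) = ec w := by
    intro w; simp [hσ]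
  -- z is periodic
  have hper : z ∈ periodicPts σ := by
    refine ⟨orderOf σ, orderOf_pos σ, ?_⟩
    show σ^[orderOf σ] z = z
    rw [Equiv.Perm.iterate_eq_pow, pow_orderOf_eq_one]; rfl
  set t := minimalPeriod σ z with ht
  have htpos : 0 < t := minimalPeriod_pos_of_mem_periodicPts hper
  have ht1 : t ≠ 1 := by
    intro h1
    -- σ z = z
    have : σ z = z := by
      have := iterate_minimalPeriod (f := ⇑σ) (x := z)
      rwa [← ht, h1, Function.iterate_one] at this
    have hcz : A z (ec z) = c := hPc z (by simpa using (horb 0).1)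
    have hdz : A z (ed z) = d := hPd z (by simpa using (horb 0).2)
    have : ed (σ z) = ec z := hstep z
    rw [‹σ z = z›] at this
    rw [← this] at hcz
    exact hcd (hcz ▸ hdz ▸ rfl : c = d)
  have ht2 : 2 ≤ t := by omega
  have hxinj : ∀ i i', i < t → i' < t → σ^[i] z = σ^[i'] z → i = i' := by
    intro i i' hi hi' he
    exact iterate_injOn_Iio_minimalPeriod (f := ⇑σ) (x := z) hi hi' he
  refine hA c d hcd t (fun m => σ^[m] z) (fun m => ec (σ^[m] z)) ht2 hxinj
    (fun i i' hi hi' he => hxinj i i' hi hi' (ec.injective he)) ?_ ?_ ?_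
  · show σ^[t] z = σ^[0] z
    simp only [Function.iterate_zero, id_eq]
    rw [ht]; exact iterate_minimalPeriod
  · intro i _; exact hPc _ (horb i).1
  · intro i _
    have : ed (σ^[i+1] z) = ec (σ^[i] z) := by
      rw [Function.iterate_succ_apply']
      exact hstep _
    show A (σ^[i+1] z) (ec (σ^[i] z)) = d
    rw [← this]
    exact hPd _ (horb (i+1)).2

/-- Every orbit hits a non-real point. -/
lemma orbit_hits (A : Fin n → Fin n → Fin k) (hA : NoPattern n k A)
    {c d : Fin k} (hcd : c ≠ d) (ec ed : Perm (Fin n))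
    (Pc Pd : Fin n → Prop)
    (hPc : ∀ i, Pc i → A i (ec i) = c)
    (hPd : ∀ i, Pd i → A i (ed i) = d)
    (z : Fin n) :
    ∃ p : Fin n, Equiv.Perm.SameCycle (ec.trans ed.symm) z p ∧ (¬ Pc p ∨ ¬ Pd p) := by
  by_contra h
  push_neg at h
  refine orbit_real_false A hA hcd ec ed Pc Pd hPc hPd z (fun m => ?_)
  have hsc : Equiv.Perm.SameCycle (ec.trans ed.symm) z ((ec.trans ed.symm)^[m] z) :=
    ⟨(m : ℤ), by rw [zpow_natCast, ← Equiv.Perm.iterate_eq_pow]⟩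
  rcases h _ hsc with ⟨h1, h2⟩
  exact ⟨h1, h2⟩

end Orbit



section Comb

variable {n : ℕ} (A : Fin n → Fin n → Fin (n+1))

def rowsW (c : Fin (n+1)) : Finset (Fin n) :=
  Finset.univ.filter (fun i => ∃ j, A i j = c)

def colsW (c : Fin (n+1)) : Finset (Fin n) :=
  Finset.univ.filter (fun j => ∃ i, A i j = c)

def fib (c : Fin (n+1)) : Finset (Fin n × Fin n) :=
  Finset.univ.filter (fun p => A p.1 p.2 = c)

variable {A}
variable (hrow : ∀ i j j', A i j = A i j' → j = j')
variable (hcol : ∀ i i' j, A i j = A i' j → i = i')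

include hrow in
lemma fib_card_rows (c : Fin (n+1)) : (fib A c).card = (rowsW A c).card := by
  rw [show rowsW A c = (fib A c).image Prod.fst by
    ext i
    simp only [rowsW, fib, Finset.mem_filter, Finset.mem_univ, true_and, Finset.mem_image]
    constructor
    · rintro ⟨j, hj⟩; exact ⟨(i, j), by simpa using hj⟩
    · rintro ⟨⟨a, b⟩, hab, rfl⟩; exact ⟨b, by simpa using hab⟩]
  rw [Finset.card_image_of_injOn]
  intro p hp q hq hpq
  simp only [fib, Finset.mem_coe, Finset.mem_filter, Finset.mem_univ, true_and] at hp hq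
  have := hrow p.1 p.2 q.2 (by rw [hp, ← hq, hpq])
  exact Prod.ext hpq this

include hcol in
lemma fib_card_cols (c : Fin (n+1)) : (fib A c).card = (colsW A c).card := by
  rw [show colsW A c = (fib A c).image Prod.snd by
    ext j
    simp only [colsW, fib, Finset.mem_filter, Finset.mem_univ, true_and, Finset.mem_image]
    constructor
    · rintro ⟨i, hi⟩; exact ⟨(i, j), by simpa using hi⟩
    · rintro ⟨⟨a, b⟩, hab, rfl⟩; exact ⟨a, by simpa using hab⟩]
  rw [Finset.card_image_of_injOn]
  intro p hp q hq hpq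
  simp only [fib, Finset.mem_coe, Finset.mem_filter, Finset.mem_univ, true_and] at hp hq
  have := hcol p.1 q.1 p.2 (by rw [hp, ← hq, hpq])
  exact Prod.ext this hpq

lemma fib_sum : ∑ c : Fin (n+1), (fib A c).card = n * n := by
  have := Finset.card_eq_sum_card_fiberwise
    (f := fun p : Fin n × Fin n => A p.1 p.2) (s := Finset.univ) (t := Finset.univ)
    (fun x _ => Finset.mem_univ _)
  simp only [Finset.card_univ, Fintype.card_prod, Fintype.card_fin] at this
  exact this.symm

include hcol in
/-- build a permutation from a color present in every row -/
lemma mk_perfect (c : Fin (n+1)) (hc : rowsW A c = Finset.univ) :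
    ∃ e : Perm (Fin n), ∀ i, A i (e i) = c := by
  have hex : ∀ i : Fin n, ∃ j, A i j = c := by
    intro i
    have : i ∈ rowsW A c := hc ▸ Finset.mem_univ i
    simpa [rowsW] using this
  set B : Fin n → Fin n := fun i => (hex i).choose with hB
  have hBspec : ∀ i, A i (B i) = c := fun i => (hex i).choose_spec
  have hinj : Function.Injective B := by
    intro i i' he
    exact hcol i i' (B i) (by rw [hBspec i, he, hBspec i'])
  exact ⟨Equiv.ofBijective B ((Finite.injective_iff_bijective).1 hinj),
    fun i => hBspec i⟩

include hrow hcol in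
/-- build a permutation from a color present in all rows but one -/
lemma mk_deficient (hn : 1 ≤ n) (c : Fin (n+1)) (hc : (rowsW A c).card = n - 1) :
    ∃ (e : Perm (Fin n)) (r : Fin n), ∀ i, i ≠ r → A i (e i) = c := by
  have hrsub : rowsW A c ⊆ Finset.univ := Finset.subset_univ _
  have hcard1 : (Finset.univ \ rowsW A c).card = 1 := by
    rw [Finset.card_sdiff_of_subset hrsub, Finset.card_univ, Fintype.card_fin, hc]; omega
  obtain ⟨r, hr⟩ := Finset.card_eq_one.1 hcard1
  have hmemrow : ∀ i : Fin n, i ≠ r → ∃ j, A i j = c := by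
    intro i hi
    by_contra hno
    have : i ∈ Finset.univ \ rowsW A c := by
      simp [rowsW, hno]
    rw [hr] at this
    exact hi (Finset.mem_singleton.1 this)
  -- missing column
  have hccard : (colsW A c).card = n - 1 := by
    rw [← fib_card_cols hcol, fib_card_rows hrow, hc]
  have hcard1' : (Finset.univ \ colsW A c).card = 1 := by
    rw [Finset.card_sdiff_of_subset (Finset.subset_univ _), Finset.card_univ, Fintype.card_fin, hccard]
    omega
  obtain ⟨jc, hjc⟩ := Finset.card_eq_one.1 hcard1'
  have hjcno : ∀ i, A i jc ≠ c := by
    intro i hi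
    have : jc ∈ colsW A c := by simp [colsW]; exact ⟨i, hi⟩
    have : jc ∈ Finset.univ \ colsW A c := hjc ▸ Finset.mem_singleton_self jc
    simp [colsW] at this
    exact this i hi
  set B : Fin n → Fin n := fun i => if h : ∃ j, A i j = c then h.choose else jc with hB
  have hBreal : ∀ i (h : ∃ j, A i j = c), A i (B i) = c := by
    intro i h
    simp only [hB, dif_pos h]
    exact h.choose_spec
  have hinj : Function.Injective B := by
    intro i i' he
    by_cases h : ∃ j, A i j = c <;> by_cases h' : ∃ j, A i' j = c
    · exact hcol i i' (B i) (by rw [hBreal i h, he, hBreal i' h'])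
    · exfalso
      have : B i' = jc := by simp only [hB, dif_neg h']
      rw [this] at he
      exact hjcno i (he ▸ hBreal i h)
    · exfalso
      have : B i = jc := by simp only [hB, dif_neg h]
      rw [this] at he
      exact hjcno i' (he.symm ▸ hBreal i' h')
    · have hi : i = r := by
        by_contra hir; exact h (hmemrow i hir)
      have hi' : i' = r := by
        by_contra hir; exact h' (hmemrow i' hir)
      rw [hi, hi']
  refine ⟨Equiv.ofBijective B ((Finite.injective_iff_bijective).1 hinj), r, fun i hi => ?_⟩
  exact hBreal i (hmemrow i hi)

end Comb

section Main

theorem combinatorial_main (n : ℕ) (hn : 3 ≤ n) (hodd : Odd n)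
    (A : Fin n → Fin n → Fin (n+1))
    (hrow : ∀ i j j', A i j = A i j' → j = j')
    (hcol : ∀ i i' j, A i j = A i' j → i = i')
    (hA : NoPattern n (n+1) A) : False := by
  have hz0 : (0 : ℕ) < n := by omega
  set z0 : Fin n := ⟨0, hz0⟩ with hz0def
  -- no two perfect colors
  have hnot2 : ∀ c d : Fin (n+1), c ≠ d →
      rowsW A c = Finset.univ → rowsW A d = Finset.univ → False := by
    intro c d hcd hc hd
    obtain ⟨ec, hec⟩ := mk_perfect hcol c hc
    obtain ⟨ed, hed⟩ := mk_perfect hcol d hd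
    exact orbit_real_false A hA hcd ec ed (fun _ => True) (fun _ => True)
      (fun i _ => hec i) (fun i _ => hed i) z0 (fun m => ⟨trivial, trivial⟩)
  -- row cardinalities
  have hle : ∀ c, (rowsW A c).card ≤ n := by
    intro c
    have := Finset.card_le_card (Finset.subset_univ (rowsW A c))
    simpa using this
  have huniv_of_card : ∀ c, (rowsW A c).card = n → rowsW A c = Finset.univ := by
    intro c hc
    apply Finset.eq_univ_of_card
    simp [hc]
  have hsum : ∑ c : Fin (n+1), (rowsW A c).card = n * n := by
    rw [← fib_sum (A := A)]
    exact Finset.sum_congr rfl (fun c _ => (fib_card_rows hrow c).symm)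
  -- at most one perfect color, so exactly one
  have hexu : ∃ c0 : Fin (n+1), (rowsW A c0).card = n := by
    by_contra hno
    push_neg at hno
    have hball : ∀ c : Fin (n+1), (rowsW A c).card ≤ n - 1 := by
      intro c
      have h1 := hle c
      have h2 := hno c
      omega
    have : ∑ c : Fin (n+1), (rowsW A c).card ≤ (n+1) * (n-1) := by
      calc ∑ c : Fin (n+1), (rowsW A c).card ≤ ∑ _c : Fin (n+1), (n-1) :=
            Finset.sum_le_sum (fun c _ => hball c)
        _ = (n+1) * (n-1) := by simp [Finset.sum_const, Finset.card_univ, mul_comm]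
    rw [hsum] at this
    obtain ⟨m, rfl⟩ : ∃ m, n = m + 1 := ⟨n - 1, by omega⟩
    simp only [Nat.add_sub_cancel] at this
    nlinarith
  obtain ⟨c0, hc0⟩ := hexu
  have hdefle : ∀ c, c ≠ c0 → (rowsW A c).card ≤ n - 1 := by
    intro c hc
    by_contra hgt
    have : (rowsW A c).card = n := by have := hle c; omega
    exact hnot2 c c0 hc (huniv_of_card c this) (huniv_of_card c0 hc0)
  have hdef : ∀ c, c ≠ c0 → (rowsW A c).card = n - 1 := by
    intro c hc
    by_contra hne
    have hlt : (rowsW A c).card < n - 1 := by have := hdefle c hc; omega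
    have hsum' : ∑ d ∈ Finset.univ.erase c0, (rowsW A d).card < n * (n - 1) := by
      calc ∑ d ∈ Finset.univ.erase c0, (rowsW A d).card
          < ∑ _d ∈ Finset.univ.erase c0, (n-1) := by
            apply Finset.sum_lt_sum
            · intro d hd
              exact hdefle d (Finset.ne_of_mem_erase hd)
            · exact ⟨c, Finset.mem_erase.2 ⟨hc, Finset.mem_univ c⟩, hlt⟩
        _ = n * (n-1) := by
            rw [Finset.sum_const, Finset.card_erase_of_mem (Finset.mem_univ c0)]
            simp [Finset.card_univ, mul_comm]
    have hsplit : (rowsW A c0).card + ∑ d ∈ Finset.univ.erase c0, (rowsW A d).card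
        = n * n := by
      rw [← hsum]
      exact Finset.add_sum_erase Finset.univ (fun d => (rowsW A d).card) (Finset.mem_univ c0)
    rw [hc0] at hsplit
    obtain ⟨m, rfl⟩ : ∃ m, n = m + 1 := ⟨n - 1, by omega⟩
    simp only [Nat.add_sub_cancel] at hsum' hsplit
    nlinarith
  -- the permutations
  obtain ⟨e0, he0⟩ := mk_perfect hcol c0 (huniv_of_card c0 hc0)
  have hfam : ∀ c : Fin (n+1), ∃ (e : Perm (Fin n)) (r : Fin n),
      c ≠ c0 → ∀ i, i ≠ r → A i (e i) = c := by
    intro c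
    by_cases hc : c = c0
    · exact ⟨e0, z0, fun h => absurd hc h⟩
    · obtain ⟨e, r, he⟩ := mk_deficient hrow hcol (by omega) c (hdef c hc)
      exact ⟨e, r, fun _ => he⟩
  choose E R hE using hfam
  -- pair (c0, c): coverage by one point
  have hpair0 : ∀ c : Fin (n+1), c ≠ c0 →
      (∀ z, e0 z ≠ E c z) ∧ Equiv.Perm.sign (E c) * Equiv.Perm.sign e0 = 1 := by
    intro c hc
    set σ : Perm (Fin n) := e0.trans (E c).symm with hσ
    have hcov : ∀ z, σ.SameCycle z (R c) := by
      intro z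
      obtain ⟨p, hsc, hbad⟩ := orbit_hits A hA (Ne.symm hc) e0 (E c)
        (fun _ => True) (fun i => i ≠ R c)
        (fun i _ => he0 i) (fun i hi => hE c hc i hi) z
      rcases hbad with h | h
      · exact absurd trivial h
      · push_neg at h
        exact h ▸ hsc
    have hder := (aux_cycle_single σ (by omega) hcov).1
    have hsign := sign_single σ (by omega) hodd hcov
    constructor
    · intro z hz
      apply hder z
      show (E c).symm (e0 z) = z
      rw [hz]
      exact (E c).symm_apply_apply z
    · have : σ = (E c).symm * e0 := rfl
      rw [this] at hsign
      rw [map_mul, Equiv.Perm.sign_symm] at hsign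
      exact hsign
  -- signs are all equal to sign e0
  have hsignE : ∀ c : Fin (n+1), c ≠ c0 → Equiv.Perm.sign (E c) = Equiv.Perm.sign e0 := by
    intro c hc
    have := (hpair0 c hc).2
    rcases Int.units_eq_one_or (Equiv.Perm.sign (E c)) with h | h <;>
      rcases Int.units_eq_one_or (Equiv.Perm.sign e0) with h' | h' <;>
      rw [h, h'] at this ⊢ <;> simp_all
  -- pair (c, d), both ≠ c0
  have hpair2 : ∀ c d : Fin (n+1), c ≠ c0 → d ≠ c0 → c ≠ d → ∀ z, E c z ≠ E d z := by
    intro c d hc hd hcd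
    set σ : Perm (Fin n) := (E c).trans (E d).symm with hσ
    have hsign : Equiv.Perm.sign σ = 1 := by
      have : σ = (E d).symm * E c := rfl
      rw [this, map_mul, Equiv.Perm.sign_symm, hsignE c hc, hsignE d hd]
      rcases Int.units_eq_one_or (Equiv.Perm.sign e0) with h | h <;> rw [h] <;> decide
    have hcov : ∀ z, σ.SameCycle z (R c) ∨ σ.SameCycle z (R d) := by
      intro z
      obtain ⟨p, hsc, hbad⟩ := orbit_hits A hA hcd (E c) (E d)
        (fun i => i ≠ R c) (fun i => i ≠ R d)
        (fun i hi => hE c hc i hi) (fun i hi => hE d hd i hi) z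
      rcases hbad with h | h
      · push_neg at h; exact Or.inl (h ▸ hsc)
      · push_neg at h; exact Or.inr (h ▸ hsc)
    have hder := derangement_two σ hn hodd hsign hcov
    intro z hz
    apply hder z
    show (E d).symm (E c z) = z
    rw [hz]
    exact (E d).symm_apply_apply z
  -- final pigeonhole
  set F : Fin (n+1) → Fin n := fun c => if c = c0 then e0 z0 else E c z0 with hF
  have hFinj : Function.Injective F := by
    intro c d hcd
    by_contra hne
    by_cases hc : c = c0 <;> by_cases hd : d = c0
    · exact hne (hc.trans hd.symm)
    · rw [hF] at hcd
      simp only [hc, if_pos, if_neg hd] at hcd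
      exact (hpair0 d hd).1 z0 hcd
    · rw [hF] at hcd
      simp only [hd, if_pos, if_neg hc] at hcd
      exact (hpair0 c hc).1 z0 hcd.symm
    · rw [hF] at hcd
      simp only [if_neg hc, if_neg hd] at hcd
      exact hpair2 c d hc hd hne z0 hcd
  have := Fintype.card_le_of_injective F hFinj
  simp only [Fintype.card_fin] at this
  omega

end Main


open SimpleGraph


section Zigzag
variable {n : ℕ} (x y : ℕ → Fin n)

abbrev KG (n : ℕ) := completeBipartiteGraph (Fin n) (Fin n)

lemma KG_adj_lr (i j : Fin n) : (KG n).Adj (Sum.inl i) (Sum.inr j) := by simp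
lemma KG_adj_rl (j i : Fin n) : (KG n).Adj (Sum.inr j) (Sum.inl i) := by simp

def zigzag : (r : ℕ) → (j : ℕ) → (KG n).Walk (Sum.inl (x j)) (Sum.inr (y (j + r)))
  | 0, j => Walk.cons (KG_adj_lr (x j) (y j)) Walk.nil
  | (r+1), j => Walk.cons (KG_adj_lr (x j) (y j))
      (Walk.cons (KG_adj_rl (y j) (x (j+1)))
        ((zigzag r (j+1)).copy rfl (by rw [show j+1+r = j+(r+1) by omega])))

lemma mem_support_zigzag (r j : ℕ) (v : Fin n ⊕ Fin n) :
    v ∈ (zigzag x y r j).support ↔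
      (∃ i, j ≤ i ∧ i ≤ j + r ∧ v = Sum.inl (x i)) ∨
      (∃ i, j ≤ i ∧ i ≤ j + r ∧ v = Sum.inr (y i)) := by
  induction r generalizing j with
  | zero =>
    simp only [zigzag, Walk.support_cons, Walk.support_nil, List.mem_cons,
      List.mem_singleton, List.not_mem_nil, or_false]
    constructor
    · rintro (h | h)
      · exact Or.inl ⟨j, le_refl j, by omega, h⟩
      · exact Or.inr ⟨j, le_refl j, by omega, h⟩
    · rintro (⟨i, h1, h2, h3⟩ | ⟨i, h1, h2, h3⟩)
      · have : i = j := by omega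
        subst this; exact Or.inl h3
      · have : i = j := by omega
        subst this; exact Or.inr h3
  | succ r ih =>
    simp only [zigzag, Walk.support_cons, Walk.support_copy, List.mem_cons]
    rw [ih]
    constructor
    · rintro (h | h | (⟨i, h1, h2, h3⟩ | ⟨i, h1, h2, h3⟩))
      · exact Or.inl ⟨j, le_refl j, by omega, h⟩
      · exact Or.inr ⟨j, le_refl j, by omega, h⟩
      · exact Or.inl ⟨i, by omega, by omega, h3⟩
      · exact Or.inr ⟨i, by omega, by omega, h3⟩
    · rintro (⟨i, h1, h2, h3⟩ | ⟨i, h1, h2, h3⟩)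
      · by_cases hij : i = j
        · subst hij; exact Or.inl h3
        · exact Or.inr (Or.inr (Or.inl ⟨i, by omega, by omega, h3⟩))
      · by_cases hij : i = j
        · subst hij; exact Or.inr (Or.inl h3)
        · exact Or.inr (Or.inr (Or.inr ⟨i, by omega, by omega, h3⟩))

lemma mem_edges_zigzag (r j : ℕ) (e : Sym2 (Fin n ⊕ Fin n)) :
    e ∈ (zigzag x y r j).edges ↔
      (∃ i, j ≤ i ∧ i ≤ j + r ∧ e = s(Sum.inl (x i), Sum.inr (y i))) ∨
      (∃ i, j ≤ i ∧ i < j + r ∧ e = s(Sum.inr (y i), Sum.inl (x (i+1)))) := by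
  induction r generalizing j with
  | zero =>
    simp only [zigzag, Walk.edges_cons, Walk.edges_nil, List.mem_singleton, List.mem_cons,
      List.not_mem_nil, or_false]
    constructor
    · intro h; exact Or.inl ⟨j, le_refl j, by omega, h⟩
    · rintro (⟨i, h1, h2, h3⟩ | ⟨i, h1, h2, h3⟩)
      · have : i = j := by omega
        subst this; exact h3
      · omega
  | succ r ih =>
    simp only [zigzag, Walk.edges_cons, Walk.edges_copy, List.mem_cons]
    rw [ih]
    constructor
    · rintro (h | h | (⟨i, h1, h2, h3⟩ | ⟨i, h1, h2, h3⟩))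
      · exact Or.inl ⟨j, le_refl j, by omega, h⟩
      · exact Or.inr ⟨j, le_refl j, by omega, h⟩
      · exact Or.inl ⟨i, by omega, by omega, h3⟩
      · exact Or.inr ⟨i, by omega, by omega, h3⟩
    · rintro (⟨i, h1, h2, h3⟩ | ⟨i, h1, h2, h3⟩)
      · by_cases hij : i = j
        · subst hij; exact Or.inl h3
        · exact Or.inr (Or.inr (Or.inl ⟨i, by omega, by omega, h3⟩))
      · by_cases hij : i = j
        · subst hij; exact Or.inr (Or.inl h3)
        · exact Or.inr (Or.inr (Or.inr ⟨i, by omega, by omega, h3⟩))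

lemma zigzag_isPath (t : ℕ)
    (hx : ∀ i i', i < t → i' < t → x i = x i' → i = i')
    (hy : ∀ i i', i < t → i' < t → y i = y i' → i = i') :
    ∀ (r j : ℕ), j + r < t → (zigzag x y r j).IsPath := by
  intro r
  induction r with
  | zero =>
    intro j hj
    simp [zigzag, Walk.isPath_def]
  | succ r ih =>
    intro j hj
    have hq : (zigzag x y r (j+1)).IsPath := ih (j+1) (by omega)
    apply Walk.IsPath.cons
    · apply Walk.IsPath.cons
      · rwa [Walk.isPath_copy]
      · rw [Walk.support_copy, mem_support_zigzag]
        rintro (⟨i, h1, h2, h3⟩ | ⟨i, h1, h2, h3⟩)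
      
        · exact absurd h3 (by simp)
        · have : j = i := hy j i (by omega) (by omega) (by injection h3)
          omega
    · rw [Walk.support_cons, Walk.support_copy]
      intro hmem
      rcases List.mem_cons.1 hmem with h | h
      · exact absurd h (by simp)
      · rw [mem_support_zigzag] at h
        rcases h with ⟨i, h1, h2, h3⟩ | ⟨i, h1, h2, h3⟩
        · have : j = i := hx j i (by omega) (by omega) (by injection h3)
          omega
        · exact absurd h3 (by simp)

end Zigzag

section GraphMain
variable {n k : ℕ}


def matA (C : (KG n).edgeSet → Fin k) : Fin n → Fin n → Fin k :=
  fun i j => C ⟨s(Sum.inl i, Sum.inr j), (KG n).mem_edgeSet.2 (KG_adj_lr i j)⟩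

lemma matA_rl (C : (KG n).edgeSet → Fin k) (i j : Fin n)
    (h : s(Sum.inr j, Sum.inl i) ∈ (KG n).edgeSet) :
    C ⟨s(Sum.inr j, Sum.inl i), h⟩ = matA C i j := by
  congr 1
  exact Subtype.ext Sym2.eq_swap

lemma matA_row (C : (KG n).edgeSet → Fin k) (hp : IsProperEdgeColoring (KG n) C) :
    ∀ i j j', matA C i j = matA C i j' → j = j' := by
  intro i j j' h
  by_contra hne
  refine hp _ _ ?_ ⟨Sum.inl i, by simp, by simp⟩ h
  intro hef
  have := congrArg Subtype.val hef
  simp only [Sym2.eq_iff] at this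
  rcases this with ⟨-, h2⟩ | ⟨h1, -⟩
  · exact hne (by injection h2)
  · exact absurd h1 (by simp)

lemma matA_col (C : (KG n).edgeSet → Fin k) (hp : IsProperEdgeColoring (KG n) C) :
    ∀ i i' j, matA C i j = matA C i' j → i = i' := by
  intro i i' j h
  by_contra hne
  refine hp _ _ ?_ ⟨Sum.inr j, by simp, by simp⟩ h
  intro hef
  have := congrArg Subtype.val hef
  simp only [Sym2.eq_iff] at this
  rcases this with ⟨h1, -⟩ | ⟨h1, -⟩
  · exact hne (by injection h1)
  · exact absurd h1 (by simp)

lemma matA_noPattern (C : (KG n).edgeSet → Fin k)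
    (ha : IsAcyclicEdgeColoring (KG n) C) : NoPattern n k (matA C) := by
  intro c d hcd t x y ht hx hy hxt hc hd
  -- the path
  have hpath : (zigzag x y (t-1) 0).IsPath := zigzag_isPath x y t hx hy (t-1) 0 (by omega)
  -- the closing edge
  have hadj : (KG n).Adj (Sum.inl (x 0)) (Sum.inr (y (0 + (t-1)))) := KG_adj_lr _ _
  set p : (KG n).Walk (Sum.inr (y (0 + (t-1)))) (Sum.inl (x 0)) :=
    (zigzag x y (t-1) 0).reverse with hp
  set w : (KG n).Walk (Sum.inl (x 0)) (Sum.inl (x 0)) := Walk.cons hadj p with hw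
  have hedge_mem : ∀ e ∈ p.edges, e ∈ (zigzag x y (t-1) 0).edges := by
    intro e he
    rw [hp, Walk.edges_reverse, List.mem_reverse] at he
    exact he
  have hcyc : w.IsCycle := by
    rw [hw, SimpleGraph.Walk.cons_isCycle_iff]
    constructor
    · rw [hp, SimpleGraph.Walk.isPath_reverse_iff]
      exact hpath
    · intro hmem
      have := hedge_mem _ hmem
      rw [mem_edges_zigzag] at this
      rcases this with ⟨i, h1, h2, h3⟩ | ⟨i, h1, h2, h3⟩
      · rw [Sym2.eq_iff] at h3
        rcases h3 with ⟨ha1, ha2⟩ | ⟨ha1, -⟩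
        · have e1 : (0 : ℕ) = i := hx 0 i (by omega) (by omega) (by injection ha1)
          have e2 : 0 + (t-1) = i := hy _ i (by omega) (by omega) (by injection ha2)
          omega
        · exact absurd ha1 (by simp)
      · rw [Sym2.eq_iff] at h3
        rcases h3 with ⟨ha1, -⟩ | ⟨ha1, ha2⟩
        · exact absurd ha1 (by simp)
        · have e1 : (0:ℕ) = i + 1 := hx 0 (i+1) (by omega) (by omega) (by injection ha1)
          omega
  refine ha _ w hcyc ⟨c, d, ?_⟩
  intro e he
  rw [hw, Walk.edges_cons, List.mem_cons] at he
  rcases he with he | he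
  · -- closing edge, color d
    right
    subst he
    have h1 := hd (t-1) (by omega)
    rw [show t - 1 + 1 = t by omega, hxt] at h1
    show matA C (x 0) (y (0 + (t-1))) = d
    rw [show 0 + (t-1) = t - 1 by omega]
    exact h1
  · have hz := hedge_mem _ he
    rw [mem_edges_zigzag] at hz
    rcases hz with ⟨i, h1, h2, h3⟩ | ⟨i, h1, h2, h3⟩
    · left
      subst h3
      exact hc i (by omega)
    · right
      subst h3
      exact (matA_rl C (x (i+1)) (y i) _).trans (hd i (by omega))

end GraphMain


section Endgame

open SimpleGraph

/-- With exactly n+1 colors: impossible. -/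
theorem no_coloring_succ (n : ℕ) (hn : 3 ≤ n) (hodd : Odd n)
    (C : (KG n).edgeSet → Fin (n+1))
    (hp : IsProperEdgeColoring (KG n) C)
    (ha : IsAcyclicEdgeColoring (KG n) C) : False :=
  combinatorial_main n hn hodd (matA C) (matA_row C hp) (matA_col C hp)
    (matA_noPattern C ha)

theorem bound_part (n : ℕ) (hn : 3 ≤ n) (hodd : Odd n)
    (k : ℕ) (C : (KG n).edgeSet → Fin k)
    (hp : IsProperEdgeColoring (KG n) C)
    (ha : IsAcyclicEdgeColoring (KG n) C) : n + 2 ≤ k := by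
  by_contra hlt
  push_neg at hlt
  have hk : k ≤ n + 1 := by omega
  set ι : Fin k → Fin (n+1) := Fin.castLE hk with hι
  have hinj : Function.Injective ι := Fin.castLE_injective hk
  set C' : (KG n).edgeSet → Fin (n+1) := fun e => ι (C e) with hC'
  have hp' : IsProperEdgeColoring (KG n) C' := by
    intro e f hne hsh h
    exact hp e f hne hsh (hinj h)
  have ha' : IsAcyclicEdgeColoring (KG n) C' := by
    intro v w hcyc hex
    apply ha v w hcyc
    obtain ⟨c₁, c₂, hcons⟩ := hex
    -- w has at least one edge
    have hlen : 3 ≤ w.length := hcyc.three_le_length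
    have hlen' : 0 < w.edges.length := by rw [Walk.length_edges]; omega
    obtain ⟨e0, he0⟩ := List.exists_mem_of_length_pos hlen'
    by_cases hall : ∀ (e : Sym2 (Fin n ⊕ Fin n)) (he : e ∈ w.edges),
        C ⟨e, w.edges_subset_edgeSet he⟩ = C ⟨e0, w.edges_subset_edgeSet he0⟩
    · exact ⟨C ⟨e0, w.edges_subset_edgeSet he0⟩, C ⟨e0, w.edges_subset_edgeSet he0⟩,
        fun e he => Or.inl (hall e he)⟩
    · push_neg at hall
      obtain ⟨f, hf, hfd⟩ := hall
      refine ⟨C ⟨e0, w.edges_subset_edgeSet he0⟩, C ⟨f, w.edges_subset_edgeSet hf⟩,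
        fun e he => ?_⟩
      have h0 := hcons e0 he0
      have hF := hcons f hf
      have hE := hcons e he
      rcases h0 with h0 | h0 <;> rcases hF with hF | hF <;> rcases hE with hE | hE
      · exact absurd (hinj (hF.trans h0.symm)) hfd
      · exact absurd (hinj (hF.trans h0.symm)) hfd
      · exact Or.inl (hinj (hE.trans h0.symm))
      · exact Or.inr (hinj (hE.trans hF.symm))
      · exact Or.inr (hinj (hE.trans hF.symm))
      · exact Or.inl (hinj (hE.trans h0.symm))
      · exact absurd (hinj (hF.trans h0.symm)) hfd
      · exact absurd (hinj (hF.trans h0.symm)) hfd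
  exact no_coloring_succ n hn hodd C' hp' ha'

/-- Existence of some acyclic proper edge coloring (injective one). -/
theorem exists_coloring (n : ℕ) :
    ∃ (k : ℕ) (C : (KG n).edgeSet → Fin k),
      IsProperEdgeColoring (KG n) C ∧ IsAcyclicEdgeColoring (KG n) C := by
  classical
  set V := (Fin n ⊕ Fin n)
  set k := Fintype.card (Sym2 V) with hk
  set enum : Sym2 V ≃ Fin k := Fintype.equivFin (Sym2 V) with henum
  refine ⟨k, fun e => enum e.val, ?_, ?_⟩
  · intro e f hne _ h
    exact hne (Subtype.ext (enum.injective h))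
  · intro v w hcyc hex
    obtain ⟨c₁, c₂, hcons⟩ := hex
    have hnodup : w.edges.Nodup := hcyc.isCircuit.isTrail.edges_nodup
    have hlen : 3 ≤ w.length := hcyc.three_le_length
    have hlen' : 3 ≤ w.edges.length := by rw [Walk.length_edges]; omega
    set l := w.edges with hl
    have hget : ∀ (i j : Fin l.length), l.get i = l.get j → i = j := by
      intro i j hij
      exact (List.Nodup.get_inj_iff hnodup).1 hij
    have hij : ∀ (i j : Fin l.length), i.val ≠ j.val →
        l.get i ≠ l.get j := by
      intro i j hne h
      exact hne (congrArg Fin.val (hget i j h))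
    set i0 : Fin l.length := ⟨0, by omega⟩
    set i1 : Fin l.length := ⟨1, by omega⟩
    set i2 : Fin l.length := ⟨2, by omega⟩
    have hm0 : l.get i0 ∈ w.edges := List.get_mem l i0
    have hm1 : l.get i1 ∈ w.edges := List.get_mem l i1
    have hm2 : l.get i2 ∈ w.edges := List.get_mem l i2
    have key : ∀ (a b : Sym2 V) (hha : a ∈ w.edges) (hhb : b ∈ w.edges),
        enum (⟨a, w.edges_subset_edgeSet hha⟩ : (KG n).edgeSet).val
          = enum (⟨b, w.edges_subset_edgeSet hhb⟩ : (KG n).edgeSet).val → a = b := by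
      intro a b hha hhb h
      exact enum.injective h
    have h0 := hcons (l.get i0) hm0
    have h1 := hcons (l.get i1) hm1
    have h2 := hcons (l.get i2) hm2
    rcases h0 with h0 | h0 <;> rcases h1 with h1 | h1 <;> rcases h2 with h2 | h2
    · exact hij i0 i1 (by simp) (key _ _ hm0 hm1 (h0.trans h1.symm))
    · exact hij i0 i1 (by simp) (key _ _ hm0 hm1 (h0.trans h1.symm))
    · exact hij i0 i2 (by simp) (key _ _ hm0 hm2 (h0.trans h2.symm))
    · exact hij i1 i2 (show (1:ℕ) ≠ 2 by omega) (key _ _ hm1 hm2 (h1.trans h2.symm))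
    · exact hij i1 i2 (show (1:ℕ) ≠ 2 by omega) (key _ _ hm1 hm2 (h1.trans h2.symm))
    · exact hij i0 i2 (by simp) (key _ _ hm0 hm2 (h0.trans h2.symm))
    · exact hij i0 i1 (by simp) (key _ _ hm0 hm1 (h0.trans h1.symm))
    · exact hij i0 i1 (by simp) (key _ _ hm0 hm1 (h0.trans h1.symm))

end Endgame


/-- For every odd `n ≥ 3`, every acyclic proper edge coloring of `K_{n,n}` uses at
least `n + 2` colors; equivalently `a'(K_{n,n}) ≥ n + 2`. -/
theorem stmt0 (n : ℕ) (hn : 3 ≤ n) (hodd : Odd n) :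
    (∀ (k : ℕ) (C : (completeBipartiteGraph (Fin n) (Fin n)).edgeSet → Fin k),
        IsProperEdgeColoring (completeBipartiteGraph (Fin n) (Fin n)) C →
        IsAcyclicEdgeColoring (completeBipartiteGraph (Fin n) (Fin n)) C →
        n + 2 ≤ k) ∧
      n + 2 ≤ acyclicChromaticIndex (completeBipartiteGraph (Fin n) (Fin n)) := by
  have part1 : ∀ (k : ℕ) (C : (completeBipartiteGraph (Fin n) (Fin n)).edgeSet → Fin k),
      IsProperEdgeColoring (completeBipartiteGraph (Fin n) (Fin n)) C →
      IsAcyclicEdgeColoring (completeBipartiteGraph (Fin n) (Fin n)) C →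
      n + 2 ≤ k := fun k C hp ha => bound_part n hn hodd k C hp ha
  refine ⟨part1, ?_⟩
  obtain ⟨k₀, C₀, hp₀, ha₀⟩ := exists_coloring n
  unfold acyclicChromaticIndex
  have hne : {k : ℕ | ∃ C : (completeBipartiteGraph (Fin n) (Fin n)).edgeSet → Fin k,
      IsProperEdgeColoring (completeBipartiteGraph (Fin n) (Fin n)) C ∧
      IsAcyclicEdgeColoring (completeBipartiteGraph (Fin n) (Fin n)) C}.Nonempty :=
    ⟨k₀, C₀, hp₀, ha₀⟩
  apply le_csInf hne
  rintro b ⟨C, hp, ha⟩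
  exact part1 b C hp ha
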